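/- Let B be a domain graded by a linearly ordered abelian group Λ. If c ∈ B is a nonzero homogeneous element and a, b ∈ B satisfy ab = c, then both a and b are homogeneous. -/

import Mathlib

open GradedRing DirectSum SetLike Finset
open scoped Classical

section Aux

variable {Λ B : Type*} [AddCommGroup Λ] [LinearOrder Λ] [IsOrderedAddMonoid Λ] [DecidableEq Λ]
  [Ring B] (𝒜 : Λ → AddSubgroup B) [GradedRing 𝒜]

lemma aux_proj_mul_extreme (x y : B) (mx my : Λ)
    (hkey : ∀ i j, i ∈ (decompose 𝒜 x).support → j ∈ (decompose 𝒜 y).support →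
      i + j = mx + my → (i, j) = (mx, my)) :
    proj 𝒜 (mx + my) (x * y) = proj 𝒜 mx x * proj 𝒜 my y := by
  set antidiag :=
    {z ∈ (decompose 𝒜 x).support ×ˢ (decompose 𝒜 y).support | z.1 + z.2 = mx + my} with ha
  have h1 : proj 𝒜 (mx + my) (x * y) = ∑ ij ∈ antidiag, proj 𝒜 ij.1 x * proj 𝒜 ij.2 y := by
    simp_rw [ha, proj_apply, DirectSum.decompose_mul, DirectSum.coe_mul_apply 𝒜]
  rw [h1]
  by_cases hmem : (mx, my) ∈ antidiag
  · rw [← Finset.add_sum_erase _ _ hmem]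
    have : ∑ ij ∈ antidiag.erase (mx, my), proj 𝒜 ij.1 x * proj 𝒜 ij.2 y = 0 := by
      apply Finset.sum_eq_zero
      rintro ⟨i, j⟩ hij
      simp only [antidiag, mem_erase, mem_filter, mem_product] at hij
      exact absurd (hkey i j hij.2.1.1 hij.2.1.2 hij.2.2) hij.1
    rw [this, add_zero]
  · have hz : ∀ ij ∈ antidiag, proj 𝒜 ij.1 x * proj 𝒜 ij.2 y = 0 := by
      rintro ⟨i, j⟩ hij
      have hmem' := hij
      simp only [antidiag, mem_filter, mem_product] at hij
      rw [← hkey i j hij.1.1 hij.1.2 hij.2] at hmem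
      exact absurd hmem' hmem
    rw [Finset.sum_eq_zero hz]
    -- show RHS is zero: mx ∉ support x or my ∉ support y
    by_cases hx : mx ∈ (decompose 𝒜 x).support
    · by_cases hy : my ∈ (decompose 𝒜 y).support
      · exact absurd (by simp [antidiag, hx, hy]) hmem
      · have : proj 𝒜 my y = 0 := by
          simpa [proj_apply] using DFinsupp.notMem_support_iff.mp hy
        rw [this, mul_zero]
    · have : proj 𝒜 mx x = 0 := by
        simpa [proj_apply] using DFinsupp.notMem_support_iff.mp hx
      rw [this, zero_mul]

lemma aux_support_nonempty (x : B) (hx : x ≠ 0) :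
    ((decompose 𝒜 x).support).Nonempty := by
  rw [Finset.nonempty_iff_ne_empty]
  intro h
  apply hx
  rw [← DirectSum.sum_support_decompose 𝒜 x, h, Finset.sum_empty]

end Aux

/-- Let `B` be a domain graded by a linearly ordered abelian group `Λ`.
If `c ∈ B` is a nonzero homogeneous element and `a, b ∈ B` satisfy `a * b = c`, then
both `a` and `b` are homogeneous. -/
theorem homogeneous_factors_of_homogeneous_in_graded_domain
    (Λ B : Type*) [AddCommGroup Λ] [LinearOrder Λ] [IsOrderedAddMonoid Λ] [DecidableEq Λ]
    [Ring B] [NoZeroDivisors B]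
    (𝒜 : Λ → AddSubgroup B) [GradedRing 𝒜]
    (c : B) (hc : c ≠ 0) (hchom : SetLike.IsHomogeneousElem 𝒜 c)
    (a b : B) (hab : a * b = c) :
    SetLike.IsHomogeneousElem 𝒜 a ∧ SetLike.IsHomogeneousElem 𝒜 b := by
  obtain ⟨lc, hlc⟩ := hchom
  have ha0 : a ≠ 0 := by rintro rfl; simp at hab; exact hc hab.symm
  have hb0 : b ≠ 0 := by rintro rfl; simp at hab; exact hc hab.symm
  have hsa := aux_support_nonempty 𝒜 a ha0
  have hsb := aux_support_nonempty 𝒜 b hb0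
  set Ma := ((DirectSum.decompose 𝒜 a).support).max' hsa with hMa
  set ma := ((DirectSum.decompose 𝒜 a).support).min' hsa with hma
  set Mb := ((DirectSum.decompose 𝒜 b).support).max' hsb with hMb
  set mb := ((DirectSum.decompose 𝒜 b).support).min' hsb with hmb
  have hMamem := Finset.max'_mem _ hsa
  have hmamem := Finset.min'_mem _ hsa
  have hMbmem := Finset.max'_mem _ hsb
  have hmbmem := Finset.min'_mem _ hsb
  have hproj_ne : ∀ (x : B) (i : Λ), i ∈ (DirectSum.decompose 𝒜 x).support →
      GradedRing.proj 𝒜 i x ≠ 0 := by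
    intro x i hi
    rw [GradedRing.proj_apply]
    intro h
    apply DFinsupp.mem_support_iff.mp hi
    ext
    simpa using h
  -- projection of c at degree λ' ≠ lc is zero
  have hcproj : ∀ μ : Λ, μ ≠ lc → GradedRing.proj 𝒜 μ c = 0 := by
    intro μ hμ
    rw [GradedRing.proj_apply, DirectSum.decompose_of_mem 𝒜 hlc,
      DirectSum.of_eq_of_ne _ _ _ hμ]
    rfl
  -- max degrees
  have hmaxeq : GradedRing.proj 𝒜 (Ma + Mb) (a * b) = GradedRing.proj 𝒜 Ma a *
      GradedRing.proj 𝒜 Mb b := by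
    apply aux_proj_mul_extreme
    intro i j hi hj hij
    have h1 : i ≤ Ma := Finset.le_max' _ _ hi
    have h2 : j ≤ Mb := Finset.le_max' _ _ hj
    have h3 : i = Ma := by
      by_contra h
      exact absurd hij (add_lt_add_of_lt_of_le (h1.lt_of_ne h) h2).ne
    subst h3
    rw [add_left_cancel hij]
  -- min degrees
  have hmineq : GradedRing.proj 𝒜 (ma + mb) (a * b) = GradedRing.proj 𝒜 ma a *
      GradedRing.proj 𝒜 mb b := by
    apply aux_proj_mul_extreme
    intro i j hi hj hij
    have h1 : ma ≤ i := Finset.min'_le _ _ hi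
    have h2 : mb ≤ j := Finset.min'_le _ _ hj
    have h3 : i = ma := by
      by_contra h
      exact absurd hij.symm (add_lt_add_of_lt_of_le (h1.lt_of_ne (Ne.symm h)) h2).ne
    subst h3
    rw [add_left_cancel hij]
  have hMnz : GradedRing.proj 𝒜 (Ma + Mb) (a * b) ≠ 0 := by
    rw [hmaxeq]
    exact mul_ne_zero (hproj_ne a Ma hMamem) (hproj_ne b Mb hMbmem)
  have hmnz : GradedRing.proj 𝒜 (ma + mb) (a * b) ≠ 0 := by
    rw [hmineq]
    exact mul_ne_zero (hproj_ne a ma hmamem) (hproj_ne b mb hmbmem)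
  have hM : Ma + Mb = lc := by
    by_contra h
    exact hMnz (hab ▸ hcproj _ h)
  have hm : ma + mb = lc := by
    by_contra h
    exact hmnz (hab ▸ hcproj _ h)
  have hMa_ma : ma = Ma := by
    have h1 : ma ≤ Ma := Finset.min'_le _ _ hMamem
    have h2 : mb ≤ Mb := Finset.min'_le _ _ hMbmem
    by_contra h
    exact absurd (hm.trans hM.symm) (add_lt_add_of_lt_of_le (h1.lt_of_ne h) h2).ne
  have hMb_mb : mb = Mb := by
    have := hm.trans hM.symm
    rw [hMa_ma] at this
    exact add_left_cancel this
  -- supports are singletons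
  have hsingle : ∀ (x : B) (hx : ((DirectSum.decompose 𝒜 x).support).Nonempty),
      ((DirectSum.decompose 𝒜 x).support).min' hx = ((DirectSum.decompose 𝒜 x).support).max' hx →
      SetLike.IsHomogeneousElem 𝒜 x := by
    intro x hx h
    obtain ⟨M, hsupp⟩ : ∃ M, (DirectSum.decompose 𝒜 x).support = {M} := by
      refine ⟨((DirectSum.decompose 𝒜 x).support).max' hx,
        Finset.eq_singleton_iff_unique_mem.mpr ⟨Finset.max'_mem _ _, fun i hi =>
          le_antisymm (Finset.le_max' _ _ hi) (h ▸ Finset.min'_le _ _ hi)⟩⟩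
    refine ⟨M, ?_⟩
    have := DirectSum.sum_support_decompose 𝒜 x
    rw [hsupp, Finset.sum_singleton] at this
    rw [← this]
    exact SetLike.coe_mem _
  exact ⟨hsingle a hsa hMa_ma, hsingle b hsb hMb_mb⟩
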